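/- Fix a finite set N with treatment probabilities p_j ∈ (0,1) for j ∈ N, an integer β ≥ 0, and let S collect all subsets of N of size at most β. Define the matrix M indexed by pairs (S,T) ∈ S × S with entries M_{S,T} = ∏_{j∈S∪T} p_j. Then M is invertible, with inverse A given by A_{S,T} = ∏_{j∈S} (−1/p_j) · ∏_{k∈T} (−1/p_k) · ∑_{U∈S, (S∪T)⊆U} ∏_{ℓ∈U} p_ℓ/(1−p_ℓ). -/

import Mathlib

open Finset

theorem interval_sum {ι : Type*} [DecidableEq ι] (S T : Finset ι) (hTS : T ⊆ S) :
    ∑ U ∈ S.powerset.filter (fun U => T ⊆ U), (-1 : ℝ) ^ U.card =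
      if S = T then (-1) ^ S.card else 0 := by
  have h1 : ∑ U ∈ S.powerset.filter (fun U => T ⊆ U), (-1 : ℝ) ^ U.card
      = ∑ W ∈ (S \ T).powerset, (-1 : ℝ) ^ (T ∪ W).card := by
    refine Finset.sum_nbij' (fun U => U \ T) (fun W => T ∪ W) ?_ ?_ ?_ ?_ ?_
    · intro U hU
      simp only [mem_filter, mem_powerset] at hU
      simp only [mem_powerset]
      exact sdiff_subset_sdiff hU.1 (le_refl T)
    · intro W hW
      simp only [mem_powerset] at hW
      simp only [mem_filter, mem_powerset]
      exact ⟨union_subset hTS (hW.trans sdiff_subset), subset_union_left⟩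
    · intro U hU
      simp only [mem_filter, mem_powerset] at hU
      rw [union_sdiff_of_subset hU.2]
    · intro W hW
      simp only [mem_powerset] at hW
      exact union_sdiff_cancel_left (sdiff_disjoint.symm.mono_right hW)
    · intro U hU
      simp only [mem_filter, mem_powerset] at hU
      rw [union_sdiff_of_subset hU.2]
  have hdisj : ∀ W ∈ (S \ T).powerset, (T ∪ W).card = T.card + W.card := by
    intro W hW
    simp only [mem_powerset] at hW
    exact card_union_of_disjoint (sdiff_disjoint.symm.mono_right hW)
  rw [h1, Finset.sum_congr rfl (fun W hW => by rw [hdisj W hW, pow_add])]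
  rw [← Finset.mul_sum]
  have hz : ∑ W ∈ (S \ T).powerset, (-1 : ℝ) ^ W.card
      = if S \ T = ∅ then 1 else 0 := by
    have h := @Finset.sum_powerset_neg_one_pow_card ι _ (S \ T)
    have h2 := congrArg (fun z : ℤ => (z : ℝ)) h
    push_cast at h2
    convert h2 using 2
  rw [hz]
  by_cases h : S = T
  · subst h; simp
  · rw [if_neg h, if_neg, mul_zero]
    rw [sdiff_eq_empty_iff_subset]
    intro hST
    exact h (subset_antisymm hST hTS)
open Finset

theorem key_sum {ι : Type*} [DecidableEq ι] (N : Finset ι) (p : ι → ℝ)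
    (hp : ∀ j ∈ N, 0 < p j ∧ p j < 1) (β : ℕ) (S T : Finset ι)
    (hSN : S ⊆ N) (hSc : S.card ≤ β) (hTN : T ⊆ N) (hTc : T.card ≤ β) :
    ∑ V ∈ N.powerset.filter (fun X => X.card ≤ β),
      (∏ j ∈ S ∪ V, p j) *
        ((∏ j ∈ V, (-1 / p j)) * (∏ k ∈ T, (-1 / p k)) *
          ∑ U ∈ N.powerset.filter (fun U => U.card ≤ β ∧ V ∪ T ⊆ U),
            ∏ l ∈ U, (p l / (1 - p l))) =
    if S = T then 1 else 0 := by
  classical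
  set B := N.powerset.filter (fun X => X.card ≤ β) with hB
  have hmemB : ∀ X, X ∈ B ↔ X ⊆ N ∧ X.card ≤ β := by
    intro X; simp [hB, mem_filter, mem_powerset]
  have hpne : ∀ j ∈ N, p j ≠ 0 := fun j hj => (hp j hj).1.ne'
  have hpne1 : ∀ j ∈ N, 1 - p j ≠ 0 := fun j hj => by
    have := (hp j hj).2; intro h; linarith
  set c : ι → ℝ := fun j => if j ∈ S then -1 / p j else -1 with hc
  -- Step 1: rewrite each V-summand as a sum over U ∈ B
  have step1 : ∀ V ∈ B,
      (∏ j ∈ S ∪ V, p j) *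
        ((∏ j ∈ V, (-1 / p j)) * (∏ k ∈ T, (-1 / p k)) *
          ∑ U ∈ N.powerset.filter (fun U => U.card ≤ β ∧ V ∪ T ⊆ U),
            ∏ l ∈ U, (p l / (1 - p l)))
      = ∑ U ∈ B, (if V ∪ T ⊆ U then
          ((∏ j ∈ S ∪ V, p j) * ∏ j ∈ V, (-1 / p j)) *
            ((∏ k ∈ T, (-1 / p k)) * ∏ l ∈ U, (p l / (1 - p l))) else 0) := by
    intro V hV
    have : N.powerset.filter (fun U => U.card ≤ β ∧ V ∪ T ⊆ U)
        = B.filter (fun U => V ∪ T ⊆ U) := by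
      rw [hB, filter_filter]
    rw [this, sum_filter, Finset.mul_sum, Finset.mul_sum]
    refine Finset.sum_congr rfl fun U _ => ?_
    split <;> ring
  rw [Finset.sum_congr rfl step1, Finset.sum_comm]
  -- Step 2: compute the inner sum over V for each fixed U
  have claim1 : ∀ V ⊆ N, (∏ j ∈ S ∪ V, p j) * ∏ j ∈ V, (-1 / p j)
      = (∏ j ∈ S, p j) * ∏ j ∈ V, c j := by
    intro V hVN
    have h1 : ∏ j ∈ S ∪ V, p j = (∏ j ∈ S, p j) * ∏ j ∈ V \ S, p j := by
      rw [← union_sdiff_self_eq_union, prod_union disjoint_sdiff]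
    have h2 : ∏ j ∈ V \ S, p j = ∏ j ∈ V, (if j ∈ S then 1 else p j) := by
      rw [sdiff_eq_filter, prod_filter]
      exact Finset.prod_congr rfl fun j _ => by by_cases h : j ∈ S <;> simp [h]
    rw [h1, h2, mul_assoc, ← Finset.prod_mul_distrib]
    congr 1
    refine Finset.prod_congr rfl fun j hj => ?_
    have hpj : p j ≠ 0 := hpne j (hVN hj)
    by_cases h : j ∈ S <;> simp [hc, h] <;> field_simp
  have claim2 : ∀ U ∈ B,
      (∑ V ∈ B, if V ⊆ U then ∏ j ∈ V, c j else 0) = ∏ j ∈ U, (c j + 1) := by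
    intro U hU
    rw [← sum_filter]
    have : B.filter (fun V => V ⊆ U) = U.powerset := by
      ext V
      simp only [mem_filter, mem_powerset, hmemB]
      constructor
      · exact fun h => h.2
      · intro h
        exact ⟨⟨h.trans ((hmemB U).1 hU).1, le_trans (card_le_card h) ((hmemB U).1 hU).2⟩, h⟩
    rw [this, Finset.prod_add]
    simp
  -- per-U value
  have step2 : ∀ U ∈ B,
      (∑ V ∈ B, if V ∪ T ⊆ U then
          ((∏ j ∈ S ∪ V, p j) * ∏ j ∈ V, (-1 / p j)) *
            ((∏ k ∈ T, (-1 / p k)) * ∏ l ∈ U, (p l / (1 - p l))) else 0)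
      = if T ⊆ U ∧ U ⊆ S then
          ((∏ k ∈ T, (-1 / p k)) * ∏ j ∈ S, p j) * (-1) ^ U.card else 0 := by
    intro U hU
    obtain ⟨hUN, hUc⟩ := (hmemB U).1 hU
    by_cases hTU : T ⊆ U
    · have e1 : ∀ V ∈ B, (if V ∪ T ⊆ U then
          ((∏ j ∈ S ∪ V, p j) * ∏ j ∈ V, (-1 / p j)) *
            ((∏ k ∈ T, (-1 / p k)) * ∏ l ∈ U, (p l / (1 - p l))) else 0)
          = (if V ⊆ U then ∏ j ∈ V, c j else 0) *
            ((∏ j ∈ S, p j) * ((∏ k ∈ T, (-1 / p k)) * ∏ l ∈ U, (p l / (1 - p l)))) := by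
        intro V hV
        simp only [union_subset_iff]
        by_cases hVU : V ⊆ U
        · rw [if_pos ⟨hVU, hTU⟩, if_pos hVU, claim1 V ((hmemB V).1 hV).1]
          ring
        · rw [if_neg (fun h => hVU h.1), if_neg hVU, zero_mul]
      rw [Finset.sum_congr rfl e1, ← Finset.sum_mul, claim2 U hU]
      by_cases hUS : U ⊆ S
      · rw [if_pos ⟨hTU, hUS⟩]
        have : (∏ j ∈ U, (c j + 1)) * ∏ l ∈ U, (p l / (1 - p l))
            = (-1) ^ U.card := by
          rw [← Finset.prod_mul_distrib, ← Finset.prod_const]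
          refine Finset.prod_congr rfl fun j hj => ?_
          have hjN : j ∈ N := hUN hj
          have h0 : p j ≠ 0 := hpne j hjN
          have h1 : 1 - p j ≠ 0 := hpne1 j hjN
          simp only [hc, if_pos (hUS hj)]
          field_simp
          ring
        calc (∏ j ∈ U, (c j + 1)) *
              ((∏ j ∈ S, p j) * ((∏ k ∈ T, (-1 / p k)) * ∏ l ∈ U, (p l / (1 - p l))))
            = ((∏ j ∈ U, (c j + 1)) * ∏ l ∈ U, (p l / (1 - p l))) *
              ((∏ j ∈ S, p j) * (∏ k ∈ T, (-1 / p k))) := by ring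
          _ = ((∏ k ∈ T, (-1 / p k)) * ∏ j ∈ S, p j) * (-1) ^ U.card := by
              rw [this]; ring
      · rw [if_neg (fun h => hUS h.2)]
        obtain ⟨j, hjU, hjS⟩ := not_subset.1 hUS
        have : ∏ j ∈ U, (c j + 1) = 0 :=
          Finset.prod_eq_zero hjU (by simp [hc, hjS])
        rw [this, zero_mul]
    · rw [if_neg (fun h => hTU h.1)]
      refine Finset.sum_eq_zero fun V _ => ?_
      simp only [union_subset_iff]
      rw [if_neg (fun h => hTU h.2)]
  rw [Finset.sum_congr rfl step2, ← sum_filter]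
  -- Step 3: the filtered set is the interval [T, S]
  have hBf : B.filter (fun U => T ⊆ U ∧ U ⊆ S) = S.powerset.filter (fun U => T ⊆ U) := by
    ext U
    simp only [mem_filter, mem_powerset, hmemB]
    constructor
    · exact fun h => ⟨h.2.2, h.2.1⟩
    · intro h
      exact ⟨⟨h.1.trans hSN, le_trans (card_le_card h.1) hSc⟩, h.2, h.1⟩
  rw [hBf]
  by_cases hTS : T ⊆ S
  · rw [← Finset.mul_sum, interval_sum S T hTS]
    by_cases hST : S = T
    · subst hST
      rw [if_pos rfl, if_pos rfl]
      rw [← prod_const, ← Finset.prod_mul_distrib, ← Finset.prod_mul_distrib]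
      refine Finset.prod_eq_one fun j hj => ?_
      have h0 : p j ≠ 0 := hpne j (hSN hj)
      field_simp
    · rw [if_neg hST, if_neg hST, mul_zero]
  · have : S.powerset.filter (fun U => T ⊆ U) = ∅ := by
      refine filter_eq_empty_iff.2 fun U hU hTU => ?_
      exact hTS (hTU.trans (mem_powerset.1 hU))
    rw [this, sum_empty, if_neg (fun h => hTS (by rw [h]))]
theorem stmt8 {ι : Type*} [Fintype ι] [DecidableEq ι] (N : Finset ι) (p : ι → ℝ)
    (hp : ∀ j ∈ N, 0 < p j ∧ p j < 1) (β : ℕ)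
    (M A : Matrix {S : Finset ι // S ⊆ N ∧ S.card ≤ β}
                  {S : Finset ι // S ⊆ N ∧ S.card ≤ β} ℝ)
    (hM : ∀ S T, M S T = ∏ j ∈ S.1 ∪ T.1, p j)
    (hA : ∀ S T, A S T =
      (∏ j ∈ S.1, (-1 / p j)) * (∏ k ∈ T.1, (-1 / p k)) *
        ∑ U ∈ N.powerset.filter (fun U => U.card ≤ β ∧ S.1 ∪ T.1 ⊆ U),
          ∏ l ∈ U, (p l / (1 - p l))) :
    M * A = 1 ∧ A * M = 1 := by
  classical
  have hmem : ∀ X : Finset ι,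
      X ∈ N.powerset.filter (fun X => X.card ≤ β) ↔ X ⊆ N ∧ X.card ≤ β := by
    intro X; simp [mem_filter, mem_powerset]
  have hMA : M * A = 1 := by
    ext S T
    rw [Matrix.mul_apply, Matrix.one_apply]
    have hst := Finset.sum_subtype (p := fun X => X ⊆ N ∧ X.card ≤ β) (F := inferInstance)
      (N.powerset.filter fun X => X.card ≤ β) hmem
      (fun V => (∏ j ∈ S.1 ∪ V, p j) *
        ((∏ j ∈ V, (-1 / p j)) * (∏ k ∈ T.1, (-1 / p k)) *
          ∑ U ∈ N.powerset.filter (fun U => U.card ≤ β ∧ V ∪ T.1 ⊆ U),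
            ∏ l ∈ U, (p l / (1 - p l))))
    calc (∑ V, M S V * A V T)
        = ∑ V : {X : Finset ι // X ⊆ N ∧ X.card ≤ β},
            (∏ j ∈ S.1 ∪ V.1, p j) *
              ((∏ j ∈ V.1, (-1 / p j)) * (∏ k ∈ T.1, (-1 / p k)) *
                ∑ U ∈ N.powerset.filter (fun U => U.card ≤ β ∧ V.1 ∪ T.1 ⊆ U),
                  ∏ l ∈ U, (p l / (1 - p l))) := by
          refine Finset.sum_congr rfl fun V _ => ?_
          rw [hM, hA]
      _ = ∑ V ∈ N.powerset.filter (fun X => X.card ≤ β),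
            (∏ j ∈ S.1 ∪ V, p j) *
              ((∏ j ∈ V, (-1 / p j)) * (∏ k ∈ T.1, (-1 / p k)) *
                ∑ U ∈ N.powerset.filter (fun U => U.card ≤ β ∧ V ∪ T.1 ⊆ U),
                  ∏ l ∈ U, (p l / (1 - p l))) := hst.symm
      _ = if S.1 = T.1 then 1 else 0 :=
          key_sum N p hp β S.1 T.1 S.2.1 S.2.2 T.2.1 T.2.2
      _ = if S = T then 1 else 0 := by
          by_cases h : S = T
          · simp [h]
          · rw [if_neg h, if_neg (fun hh => h (Subtype.ext hh))]
  have hMsymm : ∀ S T, M S T = M T S := fun S T => by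
    rw [hM, hM, union_comm]
  have hAsymm : ∀ S T, A S T = A T S := fun S T => by
    rw [hA, hA]
    simp only [union_comm T.1 S.1]
    ring
  have hAM : A * M = 1 := by
    ext S T
    rw [Matrix.mul_apply, Matrix.one_apply]
    have h1 := congrFun (congrFun hMA T) S
    rw [Matrix.mul_apply, Matrix.one_apply] at h1
    calc (∑ V, A S V * M V T)
        = ∑ V, M T V * A V S := by
          refine Finset.sum_congr rfl fun V _ => ?_
          rw [hMsymm V T, hAsymm S V]; ring
      _ = if T = S then 1 else 0 := h1
      _ = if S = T then 1 else 0 := by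
          by_cases h : S = T
          · simp [h]
          · rw [if_neg h, if_neg (fun hh => h hh.symm)]
  exact ⟨hMA, hAM⟩
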